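/- arXiv:2011.14404 — 2 statements merged into one kernel-verified Lean document; each statement's English description precedes it below -/
import Mathlib

section
/- If A = (Σ, Q, δ) is a completely reachable semi-automaton with |Q| > 2 in which exactly one letter is non-permutational (all other letters induce permutations of Q), then the permutation group generated by the permutational letters acts transitively on Q. -/
open Finset

universe u v

variable {Q : Type u} {A : Type v}

/-- Extended transition function on words (lists of letters). -/
def dw (δ : Q → A → Q) (q : Q) (w : List A) : Q := w.foldl δ q

/-- A subset `S` of the state set is reachable if it is the image of the
full state set under some word. -/
def reach [Fintype Q] [DecidableEq Q] (δ : Q → A → Q) (S : Finset Q) : Prop :=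
  ∃ w : List A, Finset.univ.image (fun q => dw δ q w) = S

/-- Rank of a word: cardinality of the image of the state set under it. -/
def rkw [Fintype Q] [DecidableEq Q] (δ : Q → A → Q) (w : List A) : ℕ :=
  (Finset.univ.image (fun q => dw δ q w)).card

/-- Rank of a letter. -/
def rkl [Fintype Q] [DecidableEq Q] (δ : Q → A → Q) (a : A) : ℕ :=
  (Finset.univ.image (fun q => δ q a)).card

/-- A map is a cyclic permutation with a single orbit. -/
def isCyclicPerm (f : Q → Q) : Prop :=
  Function.Bijective f ∧ ∀ p q : Q, ∃ k : ℕ, f^[k] p = q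

/-- Two subsets of states are distinguishable in the power automaton:
some word maps exactly one of them to a singleton. -/
def distinguishable [DecidableEq Q] (δ : Q → A → Q) (S T : Finset Q) : Prop :=
  ∃ u : List A,
    Xor' ((S.image (fun q => dw δ q u)).card = 1)
         ((T.image (fun q => dw δ q u)).card = 1)

/-- The set of synchronizing words. -/
def Syn [Fintype Q] [DecidableEq Q] (δ : Q → A → Q) : Set (List A) :=
  {w | (Finset.univ.image (fun q => dw δ q w)).card = 1}

/-- The Nerode right-congruence of a language. -/
def nerode (L : Set (List A)) : Setoid (List A) where
  r u v := ∀ x : List A, u ++ x ∈ L ↔ v ++ x ∈ L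
  iseqv := ⟨fun _ _ => Iff.rfl, fun h x => (h x).symm, fun h1 h2 x => (h1 x).trans (h2 x)⟩

/-- State complexity of a language: number of Nerode classes. -/
noncomputable def sc (L : Set (List A)) : ℕ := Nat.card (Quotient (nerode L))

/-- Complete reachability. -/
def complReach [Fintype Q] [DecidableEq Q] (δ : Q → A → Q) : Prop :=
  ∀ S : Finset Q, S.Nonempty → ∃ w : List A, Finset.univ.image (fun q => dw δ q w) = S

/-- The permutation group generated by the permutational letters. -/
def permGroup [Fintype Q] [DecidableEq Q] (δ : Q → A → Q) : Subgroup (Equiv.Perm Q) :=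
  Subgroup.closure {π : Equiv.Perm Q | ∃ a : A, ∀ q : Q, π q = δ q a}

lemma dw_append_singleton (δ : Q → A → Q) (q : Q) (w : List A) (a : A) :
    dw δ q (w ++ [a]) = δ (dw δ q w) a := by
  simp [dw]

lemma key_lemma [Fintype Q] [DecidableEq Q] (δ : Q → A → Q) (b : A)
    (hb : ¬ Function.Bijective (fun q => δ q b))
    (hu : ∀ a : A, ¬ Function.Bijective (fun q => δ q a) → a = b)
    (hn : 3 ≤ Fintype.card Q) :
    ∀ w : List A, (Finset.univ.image (fun q => dw δ q w)).card = Fintype.card Q - 1 →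
      ∃ g ∈ permGroup δ,
        Finset.univ.image (fun q => dw δ q w) =
          (Finset.univ.image (fun q => δ q b)).image g := by
  intro w
  induction w using List.reverseRecOn with
  | nil =>
      intro hcard
      simp only [dw, List.foldl_nil, Finset.image_id'] at hcard
      rw [Finset.card_univ] at hcard
      omega
  | append_singleton w a ih =>
      intro hcard
      have himg : Finset.univ.image (fun q => dw δ q (w ++ [a])) =
          (Finset.univ.image (fun q => dw δ q w)).image (fun q => δ q a) := by
        rw [Finset.image_image]
        simp [dw_append_singleton, Function.comp_def]
      by_cases hbij : Function.Bijective (fun q => δ q a)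
      · -- permutational letter
        have hinj : Function.Injective (fun q => δ q a) := hbij.1
        have hcardw : (Finset.univ.image (fun q => dw δ q w)).card =
            Fintype.card Q - 1 := by
          rw [himg, Finset.card_image_of_injective _ hinj] at hcard
          exact hcard
        obtain ⟨g, hg, heq⟩ := ih hcardw
        refine ⟨Equiv.ofBijective _ hbij * g, ?_, ?_⟩
        · exact mul_mem (Subgroup.subset_closure ⟨a, fun q => rfl⟩) hg
        · rw [himg, heq, Finset.image_image]
          rfl
      · -- the non-permutational letter, must be b
        have hab : a = b := hu a hbij
        subst hab
        refine ⟨1, one_mem _, ?_⟩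
        have hsub : Finset.univ.image (fun q => dw δ q (w ++ [a])) ⊆
            Finset.univ.image (fun q => δ q a) := by
          rw [himg]
          exact Finset.image_subset_image (Finset.subset_univ _)
        have hne : Finset.univ.image (fun q => δ q a) ≠ Finset.univ := by
          intro h
          apply hb
          have hsurj : Function.Surjective (fun q => δ q a) := by
            intro y
            have : y ∈ Finset.univ.image (fun q => δ q a) := by
              rw [h]; exact Finset.mem_univ y
            obtain ⟨x, _, hx⟩ := Finset.mem_image.mp this
            exact ⟨x, hx⟩
          exact Finite.surjective_iff_bijective.mp hsurj
        have hlt : (Finset.univ.image (fun q => δ q a)).card < Fintype.card Q := by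
          rw [← Finset.card_univ]
          exact Finset.card_lt_card (lt_of_le_of_ne (Finset.subset_univ _)
            hne)
        have := Finset.eq_of_subset_of_card_le hsub (by omega)
        rw [this]
        simp
      
theorem transitive_of_complReach_one_nonperm [Fintype Q] [DecidableEq Q]
    (δ : Q → A → Q)
    (hQ : 2 < Fintype.card Q)
    (hcr : complReach δ)
    (hone : ∃! a : A, ¬ Function.Bijective (fun q => δ q a)) :
    ∀ p q : Q, ∃ g ∈ permGroup δ, g p = q := by
  obtain ⟨b, hb, hu⟩ := hone
  have hu' : ∀ a : A, ¬ Function.Bijective (fun q => δ q a) → a = b := hu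
  have hn : 3 ≤ Fintype.card Q := hQ
  have hcarderase : ∀ x : Q, (Finset.univ.erase x).card = Fintype.card Q - 1 := by
    intro x
    rw [Finset.card_erase_of_mem (Finset.mem_univ x), Finset.card_univ]
  -- every set univ.erase x of size n-1 is reachable, hence of the form g '' Im(b)
  have hmain : ∀ x : Q, ∃ g : Equiv.Perm Q, g ∈ permGroup δ ∧
      Finset.univ.erase x = (Finset.univ.image (fun q => δ q b)).image g := by
    intro x
    obtain ⟨w, hw⟩ := hcr (Finset.univ.erase x)
      (Finset.card_pos.mp (by rw [hcarderase]; omega))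
    obtain ⟨g, hg, heq⟩ := key_lemma δ b hb hu' hn w (by rw [hw, hcarderase x])
    exact ⟨g, hg, hw ▸ heq⟩
  have ⟨x0⟩ : Nonempty Q := Fintype.card_pos_iff.mp (by omega)
  have hImb : (Finset.univ.image (fun q => δ q b)).card = Fintype.card Q - 1 := by
    obtain ⟨g, _, heq⟩ := hmain x0
    have := hcarderase x0
    rw [heq, Finset.card_image_of_injective _ g.injective] at this
    exact this
  -- there is a unique excluded state e
  have hne_univ : Finset.univ.image (fun q => δ q b) ≠ Finset.univ := by
    intro h
    rw [h, Finset.card_univ] at hImb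
    omega
  obtain ⟨e, _, he⟩ := Finset.exists_of_ssubset
    (Finset.ssubset_univ_iff.mpr hne_univ)
  have hImb_eq : Finset.univ.image (fun q => δ q b) = Finset.univ.erase e := by
    apply Finset.eq_of_subset_of_card_le
    · intro y hy
      exact Finset.mem_erase.mpr ⟨fun h => he (h ▸ hy), Finset.mem_univ y⟩
    · rw [hcarderase, hImb]
  -- every state is in the orbit of e
  have horb : ∀ x : Q, ∃ g : Equiv.Perm Q, g ∈ permGroup δ ∧ g e = x := by
    intro x
    obtain ⟨g, hg, heq⟩ := hmain x
    rw [hImb_eq, Finset.image_erase g.injective, Finset.image_univ_equiv] at heq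
    refine ⟨g, hg, ?_⟩
    by_contra hne
    have : x ∈ Finset.univ.erase (g e) :=
      Finset.mem_erase.mpr ⟨fun h => hne h.symm, Finset.mem_univ x⟩
    rw [← heq] at this
    exact (Finset.mem_erase.mp this).1 rfl
  intro p q
  obtain ⟨g1, hg1, hp⟩ := horb p
  obtain ⟨g2, hg2, hq⟩ := horb q
  refine ⟨g2 * g1⁻¹, mul_mem hg2 (inv_mem hg1), ?_⟩
  have : g1⁻¹ p = e := by rw [← hp]; exact g1.symm_apply_apply e
  simp [Equiv.Perm.mul_apply, this, hq]
end

section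
/- Let A = (Σ, Q, δ) be a semi-automaton over a binary alphabet Σ = {a, b} with n > 2 states. Then every subset of Q of size n-1 is reachable from Q if and only if exactly one of the two letters acts as a cyclic permutation of Q with a single orbit and the other letter has rank n-1. -/
open Finset

universe u v

variable {Q : Type u} {A : Type v}

lemma dw_append (δ : Q → A → Q) (q : Q) (u v : List A) :
    dw δ q (u ++ v) = dw δ (dw δ q u) v := by simp [dw]

lemma imgW_append [Fintype Q] [DecidableEq Q] (δ : Q → A → Q) (u v : List A) :
    univ.image (fun q => dw δ q (u ++ v)) =
      (univ.image (fun q => dw δ q u)).image (fun q => dw δ q v) := by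
  rw [Finset.image_image]
  exact Finset.image_congr (fun q _ => dw_append δ q u v)

lemma image_erase_of_bij [Fintype Q] [DecidableEq Q] {f : Q → Q}
    (hf : Function.Bijective f) (x : Q) :
    (univ.erase x).image f = univ.erase (f x) := by
  rw [Finset.image_erase hf.1, Finset.image_univ_of_surjective hf.2]

lemma eq_erase_of_card [Fintype Q] [DecidableEq Q] (S : Finset Q)
    (hS : S.card = Fintype.card Q - 1) (hn : 1 ≤ Fintype.card Q) :
    ∃ q, S = univ.erase q := by
  have hne : S ≠ univ := by
    intro h
    rw [h, Finset.card_univ] at hS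
    omega
  obtain ⟨q, hq, hqS⟩ := Finset.exists_of_ssubset (Finset.ssubset_univ_iff.mpr hne)
  refine ⟨q, Finset.eq_of_subset_of_card_le ?_ ?_⟩
  · rw [Finset.subset_erase]; exact ⟨Finset.subset_univ S, hqS⟩
  · rw [Finset.card_erase_of_mem (Finset.mem_univ q), Finset.card_univ, hS]

lemma imgW_univ [Fintype Q] [DecidableEq Q] (δ : Q → A → Q) (w : List A)
    (h : ∀ x ∈ w, Function.Bijective (fun q => δ q x)) :
    univ.image (fun q => dw δ q w) = univ := by
  induction w with
  | nil => simp [dw]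
  | cons x w ih =>
    have h1 : univ.image (fun q => dw δ q (x :: w)) =
        (univ.image (fun q => δ q x)).image (fun q => dw δ q w) := by
      rw [Finset.image_image]; rfl
    rw [h1, Finset.image_univ_of_surjective (h x List.mem_cons_self).2,
      ih (fun y hy => h y (List.mem_cons_of_mem x hy))]

lemma dw_replicate (δ : Q → A → Q) (c : A) (k : ℕ) (q : Q) :
    dw δ q (List.replicate k c) = (fun x => δ x c)^[k] q := by
  induction k generalizing q with
  | zero => rfl
  | succ k ih =>
    rw [List.replicate_succ]
    show dw δ (δ q c) (List.replicate k c) = _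
    rw [ih, ← Function.iterate_succ_apply]

lemma iterate_orbit [Fintype Q] {σ : Q → Q} (hb : Function.Bijective σ) {p : Q}
    (horb : ∀ q, ∃ k, σ^[k] p = q) : ∀ p' q', ∃ k, σ^[k] p' = q' := by
  classical
  set e : Equiv.Perm Q := Equiv.ofBijective σ hb with he
  have hcoe : ⇑e = σ := rfl
  set N := orderOf e with hNdef
  have hN : 0 < N := orderOf_pos e
  have hid : ∀ q, σ^[N] q = q := by
    intro q
    have h1 : (e ^ N) q = q := by rw [pow_orderOf_eq_one e]; rfl
    rwa [Equiv.Perm.coe_pow, hcoe] at h1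
  have hidmul : ∀ t q, σ^[N * t] q = q := by
    intro t
    induction t with
    | zero => simp
    | succ t ih =>
      intro q
      have : N * (t + 1) = N * t + N := by ring
      rw [this, Function.iterate_add_apply, ih, hid]
  intro p' q'
  obtain ⟨j, hj⟩ := horb p'
  obtain ⟨m, hm⟩ := horb q'
  have hjle : j ≤ N * (j + 1) := by nlinarith
  refine ⟨m + N * (j + 1) - j, ?_⟩
  have hk : (m + N * (j + 1) - j) + j = m + N * (j + 1) := by omega
  calc σ^[m + N * (j + 1) - j] p' = σ^[m + N * (j + 1) - j] (σ^[j] p) := by rw [hj]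
    _ = σ^[(m + N * (j + 1) - j) + j] p := by rw [Function.iterate_add_apply]
    _ = σ^[m + N * (j + 1)] p := by rw [hk]
    _ = σ^[m] (σ^[N * (j + 1)] p) := by rw [Function.iterate_add_apply]
    _ = q' := by rw [hidmul, hm]

theorem binary_reachable_iff_circular [Fintype Q] [DecidableEq Q]
    (δ : Q → Bool → Q) (hQ : 2 < Fintype.card Q) :
    (∀ S : Finset Q, S.card = Fintype.card Q - 1 → reach δ S) ↔
      (∃ c : Bool, isCyclicPerm (fun q => δ q c) ∧
        ¬ isCyclicPerm (fun q => δ q (!c)) ∧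
        rkl δ (!c) = Fintype.card Q - 1) := by
  have hcard_erase : ∀ q : Q, (univ.erase q).card = Fintype.card Q - 1 := fun q => by
    rw [Finset.card_erase_of_mem (mem_univ q), Finset.card_univ]
  constructor
  · intro hreach
    obtain ⟨q0⟩ : Nonempty Q := Fintype.card_pos_iff.mp (by omega)
    -- some letter is non-bijective
    have hex : ∃ c : Bool, ¬ Function.Bijective (fun q => δ q c) := by
      by_contra h
      push_neg at h
      obtain ⟨w, hw⟩ := hreach (univ.erase q0) (hcard_erase q0)
      rw [imgW_univ δ w (fun x _ => h x)] at hw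
      have h2 := hcard_erase q0
      rw [← hw, Finset.card_univ] at h2
      omega
    obtain ⟨c0, hc0⟩ := hex
    have hrk_lt : ∀ c : Bool, ¬ Function.Bijective (fun q => δ q c) →
        (univ.image (fun q => δ q c)).card < Fintype.card Q := by
      intro c hc
      rcases lt_or_eq_of_le (le_trans (Finset.card_image_le (s := (univ : Finset Q)) (f := fun q => δ q c)) (le_of_eq Finset.card_univ)) with h | h
      · exact h
      · exfalso
        apply hc
        have hinj : Set.InjOn (fun q => δ q c) ↑(univ : Finset Q) := by
          rw [← Finset.card_image_iff]
          rw [h, Finset.card_univ]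
        have hinj' : Function.Injective (fun q => δ q c) := fun a b hab =>
          hinj (Finset.mem_coe.mpr (mem_univ a)) (Finset.mem_coe.mpr (mem_univ b)) hab
        exact (Finite.injective_iff_bijective).mp hinj'
    by_cases hc1 : Function.Bijective (fun q => δ q (!c0))
    · -- main case: the other letter is a permutation
      -- rank of c0 is n - 1
      have hrk0 : (univ.image (fun q => δ q c0)).card = Fintype.card Q - 1 := by
        obtain ⟨w, hw⟩ := hreach (univ.erase q0) (hcard_erase q0)
        have hc0w : c0 ∈ w := by
          by_contra hmem
          rw [imgW_univ δ w ?_] at hw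
          · have h2 := hcard_erase q0
            rw [← hw, Finset.card_univ] at h2
            omega
          · intro x hx
            have hx' : x = !c0 := by
              cases x <;> cases c0 <;> simp_all
            rw [hx']; exact hc1
        obtain ⟨u, v, rfl⟩ := List.append_of_mem hc0w
        have hle : (univ.erase q0).card ≤ (univ.image (fun q => δ q c0)).card := by
          rw [← hw]
          have h1 : u ++ c0 :: v = (u ++ [c0]) ++ v := by simp
          rw [h1, imgW_append, imgW_append]
          calc (((univ.image (fun q => dw δ q u)).image (fun q => dw δ q [c0])).image
                  (fun q => dw δ q v)).card
              ≤ ((univ.image (fun q => dw δ q u)).image (fun q => dw δ q [c0])).card :=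
                Finset.card_image_le
            _ ≤ (univ.image (fun q => δ q c0)).card := by
                apply Finset.card_le_card
                exact Finset.image_subset_image (Finset.subset_univ _)
        have h2 := hrk_lt c0 hc0
        rw [hcard_erase q0] at hle
        omega
      obtain ⟨p, hp⟩ := eq_erase_of_card _ hrk0 (by omega)
      set σ : Q → Q := fun q => δ q (!c0) with hσ
      have reach_form : ∀ w : List Bool,
          (univ.image (fun q => dw δ q w)).card = Fintype.card Q - 1 →
          ∃ k, univ.image (fun q => dw δ q w) = univ.erase (σ^[k] p) := by
        intro w
        induction w using List.reverseRecOn with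
        | nil =>
          intro h
          simp only [dw, List.foldl_nil, Finset.image_id'] at h
          rw [Finset.card_univ] at h
          omega
        | append_singleton u x ih =>
          intro h
          rw [imgW_append] at h ⊢
          rcases eq_or_ne x c0 with rfl | hx
          · refine ⟨0, ?_⟩
            simp only [Function.iterate_zero, id]
            apply Finset.eq_of_subset_of_card_le
            · rw [← hp]
              exact Finset.image_subset_image (Finset.subset_univ _)
            · rw [h, Finset.card_erase_of_mem (mem_univ p), Finset.card_univ]
          · have hx' : x = !c0 := by cases x <;> cases c0 <;> simp_all
            subst hx'
            have himg : (univ.image (fun q => dw δ q u)).image (fun q => dw δ q [!c0]) =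
                (univ.image (fun q => dw δ q u)).image σ := rfl
            rw [himg] at h ⊢
            have hcard : (univ.image (fun q => dw δ q u)).card = Fintype.card Q - 1 := by
              rw [← Finset.card_image_of_injective (univ.image (fun q => dw δ q u)) hc1.1]
              exact h
            obtain ⟨k, hk⟩ := ih hcard
            refine ⟨k + 1, ?_⟩
            rw [hk, image_erase_of_bij hc1, Function.iterate_succ_apply']
      have horb : ∀ q, ∃ k, σ^[k] p = q := by
        intro q
        obtain ⟨w, hw⟩ := hreach (univ.erase q) (hcard_erase q)
        obtain ⟨k, hk⟩ := reach_form w (by rw [hw, hcard_erase])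
        rw [hw] at hk
        refine ⟨k, ?_⟩
        by_contra hne
        have hmem : q ∈ univ.erase (σ^[k] p) :=
          Finset.mem_erase.mpr ⟨fun h => hne h.symm, mem_univ q⟩
        rw [← hk] at hmem
        exact (Finset.mem_erase.mp hmem).1 rfl
      refine ⟨!c0, ⟨hc1, iterate_orbit hc1 horb⟩, ?_, ?_⟩
      · rw [Bool.not_not]
        intro hcyc
        exact hc0 hcyc.1
      · rw [Bool.not_not]
        exact hrk0
    · -- both letters non-bijective: contradiction via pigeonhole
      exfalso
      have hc1' : ¬ Function.Bijective (fun q => δ q (!c0)) := hc1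
      have hboth : ∀ c : Bool, (univ.image (fun q => δ q c)).card < Fintype.card Q := by
        intro c
        rcases eq_or_ne c c0 with rfl | hc
        · exact hrk_lt c hc0
        · have : c = !c0 := by cases c <;> cases c0 <;> simp_all
          subst this
          exact hrk_lt _ hc1'
      have key : ∀ q : Q, univ.erase q ∈
          ({univ.image (fun x => δ x true), univ.image (fun x => δ x false)} :
            Finset (Finset Q)) := by
        intro q
        obtain ⟨w, hw⟩ := hreach (univ.erase q) (hcard_erase q)
        have hwne : w ≠ [] := by
          rintro rfl
          simp only [dw, List.foldl_nil, Finset.image_id'] at hw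
          have h2 := hcard_erase q
          rw [← hw, Finset.card_univ] at h2
          omega
        rcases List.eq_nil_or_concat w with rfl | ⟨u, x, rfl⟩
        · exact absurd rfl hwne
        · rw [List.concat_eq_append, imgW_append] at hw
          have hsub : univ.erase q ⊆ univ.image (fun z => δ z x) := by
            rw [← hw]
            exact Finset.image_subset_image (Finset.subset_univ _)
          have heq : univ.erase q = univ.image (fun z => δ z x) :=
            Finset.eq_of_subset_of_card_le hsub
              (by have := hboth x; rw [hcard_erase q]; omega)
          rw [heq]
          cases x <;> simp
      have hlt2 : ({univ.image (fun x => δ x true), univ.image (fun x => δ x false)} :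
          Finset (Finset Q)).card < (univ : Finset Q).card := by
        have h1 : ({univ.image (fun x => δ x true), univ.image (fun x => δ x false)} :
            Finset (Finset Q)).card ≤ 2 :=
          le_trans (Finset.card_insert_le _ _) (by simp)
        rw [Finset.card_univ]
        omega
      obtain ⟨a, -, b, -, hab, heq⟩ :=
        Finset.exists_ne_map_eq_of_card_lt_of_maps_to hlt2 (fun q _ => key q)
      have hmem : b ∈ univ.erase a := Finset.mem_erase.mpr ⟨Ne.symm hab, mem_univ b⟩
      rw [heq] at hmem
      exact (Finset.mem_erase.mp hmem).1 rfl
  · rintro ⟨c, ⟨hbij, horb⟩, -, hrk⟩ S hS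
    have hrk' : (univ.image (fun x => δ x (!c))).card = Fintype.card Q - 1 := hrk
    obtain ⟨q, rfl⟩ := eq_erase_of_card S hS (by omega)
    obtain ⟨p, hp⟩ := eq_erase_of_card _ hrk' (by omega)
    obtain ⟨k, hk⟩ := horb p q
    refine ⟨(!c) :: List.replicate k c, ?_⟩
    have h1 : univ.image (fun x => dw δ x ((!c) :: List.replicate k c)) =
        (univ.image (fun x => δ x (!c))).image (fun x => dw δ x (List.replicate k c)) := by
      rw [Finset.image_image]; rfl
    rw [h1, hp]
    have h2 : (fun x => dw δ x (List.replicate k c)) = (fun x => δ x c)^[k] :=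
      funext (dw_replicate δ c k)
    rw [h2, image_erase_of_bij (Function.Bijective.iterate hbij k) p, hk]
end
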